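/- Let f be a weak uniform CN function with CN form [g : g₁,…,g_r] and matrix B(x*,y*) positive semidefinite at (x*,y*) ∈ X(f). If d* minimizes the quadratic q(d) = ⟪∇g(x*,y*), d⟫ + (1/2) dᵀB(x*,y*) d over the cone T(x*,y*) = {d : ⟪∇gᵢ(x*,y*), d⟫ ≤ 0, i=1..r} and q(d*) ≥ 0, then (x*,y*) is a global optimal solution of min g over X(g), and x* is a global minimizer of f. -/

import Mathlib

/-- Directional derivative of a differentiable convex function is bounded by the
function difference. -/
lemma convex_fderiv_le {E : Type*} [NormedAddCommGroup E] [NormedSpace ℝ E]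
    {φ : E → ℝ} (hc : ConvexOn ℝ Set.univ φ) (hd : Differentiable ℝ φ)
    (p q : E) : fderiv ℝ φ p (q - p) ≤ φ q - φ p := by
  set d := q - p with hdq
  have hline : HasDerivAt (fun t : ℝ => p + t • d) d 0 := by
    simpa using (HasDerivAt.const_add p ((hasDerivAt_id (0:ℝ)).smul_const d))
  have hφ : HasDerivAt (fun t : ℝ => φ (p + t • d)) (fderiv ℝ φ p d) 0 := by
    have := (hd (p + (0:ℝ) • d)).hasFDerivAt.comp_hasDerivAt 0 hline
    rw [zero_smul, add_zero] at this
    exact this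
  have hslope : ∀ t : ℝ, t ∈ Set.Ioc (0:ℝ) 1 →
      slope (fun t : ℝ => φ (p + t • d)) 0 t ≤ φ q - φ p := by
    intro t ht
    have heq : p + t • d = (1 - t) • p + t • q := by rw [hdq]; module
    have h1 : φ (p + t • d) ≤ (1 - t) * φ p + t * φ q := by
      rw [heq]
      simpa using hc.2 (Set.mem_univ p) (Set.mem_univ q)
        (by linarith [ht.2] : (0:ℝ) ≤ 1 - t) (le_of_lt ht.1) (by ring)
    have : slope (fun t : ℝ => φ (p + t • d)) 0 t
        = (φ (p + t • d) - φ p) / t := by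
      simp [slope_def_field, div_eq_inv_mul]
    rw [this]
    rw [div_le_iff₀ ht.1]
    nlinarith [ht.1, ht.2]
  have htend : Filter.Tendsto (slope (fun t : ℝ => φ (p + t • d)) 0)
      (nhdsWithin 0 (Set.Ioi 0)) (nhds (fderiv ℝ φ p d)) := by
    have := hasDerivAt_iff_tendsto_slope.mp hφ
    exact this.mono_left (nhdsWithin_mono _ (fun x hx => by
      simp at hx ⊢; exact ne_of_gt hx))
  have : fderiv ℝ φ p d ≤ φ q - φ p := by
    refine le_of_tendsto htend ?_
    filter_upwards [Ioc_mem_nhdsGT_of_mem (by norm_num : (0:ℝ) ∈ Set.Ico 0 1)]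
      with t ht using hslope t ht
  exact this

theorem weak_uniform_CN_sufficient_global (n m r : ℕ)
    (g : ((Fin n → ℝ) × (Fin m → ℝ)) → ℝ)
    (gi : Fin r → ((Fin n → ℝ) × (Fin m → ℝ)) → ℝ)
    (f : (Fin n → ℝ) → ℝ)
    (B : ((Fin n → ℝ) × (Fin m → ℝ)) →
      ((Fin n → ℝ) × (Fin m → ℝ)) →ₗ[ℝ] ((Fin n → ℝ) × (Fin m → ℝ)) →ₗ[ℝ] ℝ)
    (hgd : Differentiable ℝ g)
    (hgi : ∀ i, ConvexOn ℝ Set.univ (gi i)) (hgid : ∀ i, Differentiable ℝ (gi i))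
    (hBpsd : ∀ z d, 0 ≤ B z d d)
    (hwuc : ∀ z d, g (z + d) - g z ≥ fderiv ℝ g z d + (1 / 2) * B z d d)
    (hCNex : ∀ x, ∃ y, (∀ i, gi i (x, y) = 0) ∧ f x = g (x, y))
    (p : (Fin n → ℝ) × (Fin m → ℝ))
    (hfeas : ∀ i, gi i p = 0) (hfp : f p.1 = g p)
    (dstar : (Fin n → ℝ) × (Fin m → ℝ))
    (hdT : ∀ i, fderiv ℝ (gi i) p dstar ≤ 0)
    (hdmin : ∀ d, (∀ i, fderiv ℝ (gi i) p d ≤ 0) →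
      fderiv ℝ g p dstar + (1 / 2) * B p dstar dstar
        ≤ fderiv ℝ g p d + (1 / 2) * B p d d)
    (hq : 0 ≤ fderiv ℝ g p dstar + (1 / 2) * B p dstar dstar) :
    (∀ q : (Fin n → ℝ) × (Fin m → ℝ), (∀ i, gi i q = 0) → g p ≤ g q) ∧
    (∀ x, f p.1 ≤ f x) := by
  have main : ∀ q : (Fin n → ℝ) × (Fin m → ℝ), (∀ i, gi i q = 0) → g p ≤ g q := by
    intro q hqf
    set d := q - p with hd
    have hdcone : ∀ i, fderiv ℝ (gi i) p d ≤ 0 := by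
      intro i
      have := convex_fderiv_le (hgi i) (hgid i) p q
      simpa [hfeas i, hqf i, hd] using this
    have h1 : g (p + d) - g p ≥ fderiv ℝ g p d + (1 / 2) * B p d d := hwuc p d
    have h2 := hdmin d hdcone
    have : g p ≤ g (p + d) := by linarith
    simpa [hd] using this
  refine ⟨main, ?_⟩
  intro x
  obtain ⟨y, hy, hfx⟩ := hCNex x
  rw [hfp, hfx]
  exact main (x, y) hy
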